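/- Let G be a graph obtained from a block B by attaching whiskers at each vertex of a set W of cut vertices, and suppose G is accessible with at least 3 whiskers. If w is a free vertex of B (a vertex belonging to a unique maximal clique of B) that is not a whiskered vertex, then w does not belong to any cut set of G; consequently, for any cut vertex v of G adjacent to w, no cut set of G \ {v} can contain N_B(v). -/

import Mathlib

open SimpleGraph Finset

variable {V : Type*}

/-- Number of connected components of the induced subgraph on the complement of `S`. -/
noncomputable def ncomp (G : SimpleGraph V) (S : Finset V) : ℕ :=
  Nat.card ((G.induce {v | v ∉ S}).ConnectedComponent)

/-- `S` is a cut set of `G`. -/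
def cutSet [DecidableEq V] (G : SimpleGraph V) (S : Finset V) : Prop :=
  S = ∅ ∨ ∀ i ∈ S, ncomp G (S.erase i) < ncomp G S

/-- `G` is combinatorially unmixed. -/
def unmixed [DecidableEq V] (G : SimpleGraph V) : Prop :=
  G.Connected ∧ ∀ S : Finset V, cutSet G S → ncomp G S = S.card + 1

/-- `G` is accessible. -/
def accessible [DecidableEq V] (G : SimpleGraph V) : Prop :=
  unmixed G ∧ ∀ S : Finset V, cutSet G S → S ≠ ∅ → ∃ s ∈ S, cutSet G (S.erase s)

/-- A block: connected with no cut vertices. -/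
def isBlock [DecidableEq V] (G : SimpleGraph V) : Prop :=
  G.Connected ∧ ∀ v : V, ¬ cutSet G {v}

/-- The graph obtained from `B` by attaching a whisker (pendant leaf) at each `f i`. -/
def whisker {k : ℕ} (B : SimpleGraph V) (f : Fin k → V) : SimpleGraph (V ⊕ Fin k) :=
  SimpleGraph.fromRel (fun x y => match x, y with
    | Sum.inl a, Sum.inl b => B.Adj a b
    | Sum.inl a, Sum.inr i => a = f i
    | _, _ => False)

/-- A free vertex: a vertex contained in a unique maximal clique. -/
def freeVertex (G : SimpleGraph V) (v : V) : Prop :=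
  ∃! s : Set V, v ∈ s ∧ G.IsClique s ∧ ∀ t, G.IsClique t → s ⊆ t → s = t

section Aux

variable {W : Type*} [DecidableEq W]

lemma reach_aux (G : SimpleGraph W) (S : Finset W) (v : W) (hv : v ∈ S)
    (hcl : ∀ a b, G.Adj v a → G.Adj v b → a ≠ b → G.Adj a b) :
    ∀ n (x y : {w : W | w ∉ S.erase v}) (p : (G.induce {w : W | w ∉ S.erase v}).Walk x y),
      p.length = n → ∀ (hx : (x : W) ∉ S) (hy : (y : W) ∉ S),
      (G.induce {w : W | w ∉ S}).Reachable ⟨(x : W), hx⟩ ⟨(y : W), hy⟩ := by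
  intro n
  induction n using Nat.strong_induction_on with
  | _ n IH =>
    intro x y p hlen hx hy
    cases p with
    | nil => exact Reachable.refl _
    | @cons _ z _ h q =>
      by_cases hz : (z : W) = v
      · cases q with
        | nil => exact absurd hv (hz ▸ hy)
        | @cons _ w _ h2 q2 =>
          have hzw : (z : W) ≠ (w : W) := (show G.Adj (z : W) (w : W) from h2).ne
          have hwv : (w : W) ≠ v := fun hw => hzw (hz.trans hw.symm)
          have hw : (w : W) ∉ S := fun hmem => w.2 (Finset.mem_erase.mpr ⟨hwv, hmem⟩)
          have hvx : G.Adj v (x : W) := by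
            have := (show G.Adj (x : W) (z : W) from h).symm; rwa [hz] at this
          have hvw : G.Adj v (w : W) := by
            have := (show G.Adj (z : W) (w : W) from h2); rwa [hz] at this
          have hlen' : q2.length < n := by
            simp only [SimpleGraph.Walk.length_cons] at hlen; omega
          by_cases hxw : (x : W) = (w : W)
          · have e : (⟨(x : W), hx⟩ : {w : W | w ∉ S}) = ⟨(w : W), hw⟩ := Subtype.ext hxw
            rw [e]
            exact IH q2.length hlen' w y q2 rfl hw hy
          · have ha : (G.induce {w : W | w ∉ S}).Adj ⟨(x : W), hx⟩ ⟨(w : W), hw⟩ :=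
              hcl _ _ hvx hvw hxw
            exact ha.reachable.trans (IH q2.length hlen' w y q2 rfl hw hy)
      · have hz' : (z : W) ∉ S := fun hmem => z.2 (Finset.mem_erase.mpr ⟨hz, hmem⟩)
        have hlen' : q.length < n := by
          simp only [SimpleGraph.Walk.length_cons] at hlen; omega
        have ha : (G.induce {w : W | w ∉ S}).Adj ⟨(x : W), hx⟩ ⟨(z : W), hz'⟩ :=
          (show G.Adj (x : W) (z : W) from h)
        exact ha.reachable.trans (IH q.length hlen' z y q rfl hz' hy)

lemma ncomp_le_erase [Fintype W] (G : SimpleGraph W) (S : Finset W) (v : W) (hv : v ∈ S)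
    (hcl : ∀ a b, G.Adj v a → G.Adj v b → a ≠ b → G.Adj a b) :
    ncomp G S ≤ ncomp G (S.erase v) := by
  classical
  let hom : G.induce {w : W | w ∉ S} →g G.induce {w : W | w ∉ S.erase v} :=
    ⟨fun a => ⟨(a : W), fun hm => a.2 (Finset.mem_of_mem_erase hm)⟩, fun h => h⟩
  have hinj : Function.Injective (ConnectedComponent.map hom) := by
    intro c d
    refine ConnectedComponent.ind₂ (fun a b h => ?_) c d
    rw [ConnectedComponent.map_mk, ConnectedComponent.map_mk, ConnectedComponent.eq] at h
    rw [ConnectedComponent.eq]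
    obtain ⟨p⟩ := h
    have := reach_aux G S v hv hcl p.length (hom a) (hom b) p rfl a.2 b.2
    exact this
  exact Nat.card_le_card_of_injective _ hinj

lemma simplicial_not_mem_cutSet [Fintype W] (G : SimpleGraph W) (v : W)
    (hcl : ∀ a b, G.Adj v a → G.Adj v b → a ≠ b → G.Adj a b)
    (S : Finset W) (hS : cutSet G S) (hv : v ∈ S) : False := by
  rcases hS with h | h
  · simp [h] at hv
  · exact (h v hv).not_ge (ncomp_le_erase G S v hv hcl)

end Aux

lemma freeVertex_simplicial [Finite V] (B : SimpleGraph V) (u : V) (h : freeVertex B u) :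
    ∀ a b, B.Adj u a → B.Adj u b → a ≠ b → B.Adj a b := by
  classical
  obtain ⟨s0, ⟨hu0, hcl0, hmax0⟩, huniq⟩ := h
  have key : ∀ a, B.Adj u a → a ∈ s0 := by
    intro a ha
    have hc : B.IsClique {u, a} := SimpleGraph.isClique_pair.mpr fun _ => ha
    set 𝒞 : Set (Set V) := {t | B.IsClique t ∧ ({u, a} : Set V) ⊆ t} with h𝒞
    have hfin : 𝒞.Finite := Set.toFinite _
    have hne : 𝒞.Nonempty := ⟨{u, a}, hc, subset_rfl⟩
    obtain ⟨t, ht, hmax⟩ := Set.Finite.exists_maximalFor id 𝒞 hfin hne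
    have hmax' : ∀ t', B.IsClique t' → t ⊆ t' → t = t' := fun t' h1 h2 =>
      le_antisymm h2 (hmax ⟨h1, ht.2.trans h2⟩ h2)
    have hts0 : t = s0 := huniq t ⟨ht.2 (by simp), ht.1, hmax'⟩
    exact hts0 ▸ ht.2 (by simp)
  intro a b ha hb hne
  exact hcl0 (key a ha) (key b hb) hne

lemma whisker_neighbor {k : ℕ} (B : SimpleGraph V) (f : Fin k → V)
    (u : V) (hnot : u ∉ Set.range f) :
    ∀ x, (whisker B f).Adj (Sum.inl u) x → ∃ c, x = Sum.inl c ∧ B.Adj u c := by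
  intro x hx
  rw [whisker, SimpleGraph.fromRel_adj] at hx
  obtain ⟨hne', hr | hr⟩ := hx
  · cases x with
    | inl c => exact ⟨c, rfl, hr⟩
    | inr i => exact absurd ⟨i, hr.symm⟩ hnot
  · cases x with
    | inl c => exact ⟨c, rfl, hr.symm⟩
    | inr i => exact hr.elim

lemma whisker_simplicial [Finite V] {k : ℕ} (B : SimpleGraph V) (f : Fin k → V)
    (u : V) (hfree : freeVertex B u) (hnot : u ∉ Set.range f) :
    ∀ a b, (whisker B f).Adj (Sum.inl u) a → (whisker B f).Adj (Sum.inl u) b → a ≠ b →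
      (whisker B f).Adj a b := by
  intro a b ha hb hne
  obtain ⟨c, rfl, hc⟩ := whisker_neighbor B f u hnot a ha
  obtain ⟨d, rfl, hd⟩ := whisker_neighbor B f u hnot b hb
  have hcd : c ≠ d := fun h => hne (by rw [h])
  have : B.Adj c d := freeVertex_simplicial B u hfree c d hc hd hcd
  rw [whisker, SimpleGraph.fromRel_adj]
  exact ⟨hne, Or.inl this⟩


theorem freeVertex_not_in_cutSets_whisker [Fintype V] [DecidableEq V] {k : ℕ}
    (hk : 3 ≤ k) (B : SimpleGraph V) (hB : isBlock B)
    (f : Fin k → V) (hf : Function.Injective f)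
    (hacc : accessible (whisker B f))
    (u : V) (hfree : freeVertex B u) (hnot : u ∉ Set.range f) :
    (∀ S : Finset (V ⊕ Fin k), cutSet (whisker B f) S → Sum.inl u ∉ S) ∧
    ∀ i : Fin k, B.Adj (f i) u →
      ∀ S : Finset {x : V ⊕ Fin k // x ≠ Sum.inl (f i)},
        cutSet ((whisker B f).induce {x | x ≠ Sum.inl (f i)}) S →
        ¬ (∀ z, B.Adj (f i) z → Sum.inl z ∈ S.image Subtype.val) := by
  have hcl := whisker_simplicial B f u hfree hnot
  constructor
  · intro S hS hmem
    exact (simplicial_not_mem_cutSet (whisker B f) (Sum.inl u) hcl S hS hmem).elim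
  · intro i hadj S hS hall
    have hu := hall u hadj
    rw [Finset.mem_image] at hu
    obtain ⟨a, haS, hav⟩ := hu
    refine simplicial_not_mem_cutSet ((whisker B f).induce {x | x ≠ Sum.inl (f i)}) a ?_ S hS haS
    intro p q hp hq hne
    have hp' : (whisker B f).Adj (↑a) (↑p) := hp
    have hq' : (whisker B f).Adj (↑a) (↑q) := hq
    rw [hav] at hp' hq'
    exact hcl _ _ hp' hq' fun h => hne (Subtype.ext h)
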